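/- arXiv:2512.09832 — 2 statements merged into one kernel-verified Lean document; each statement's English description precedes it below -/
import Mathlib

section
/- Let G be a finite simple graph that contains an induced cycle, and let m be the maximum n ≥ 3 such that cycleGraph n embeds into G. Let S be a set of natural numbers each strictly greater than m, and let D_S be the disjoint union of the cycle graphs C_s for s ∈ S. Then there is no graph embedding of G into D_S; that is, D_S is G-free. -/
open SimpleGraph

/-- The disjoint union of the cycle graphs `C_s` for `s ∈ S`: the simple graph on the sigma
type `Σ s : S, Fin s` in which two vertices are adjacent iff they lie in the same summand
`s` and are adjacent in `cycleGraph s`. -/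
def cyclesDisjointUnion (S : Set ℕ) : SimpleGraph (Σ s : S, Fin (s : ℕ)) where
  Adj x y := ∃ h : (x.1 : ℕ) = (y.1 : ℕ), (cycleGraph (y.1 : ℕ)).Adj (Fin.cast h x.2) y.2
  symm := by
    constructor
    rintro ⟨⟨s, hs⟩, i⟩ ⟨⟨t, ht⟩, j⟩ ⟨h, hadj⟩
    dsimp only at h
    subst h
    exact ⟨rfl, by simpa [Fin.ext_iff] using hadj.symm⟩
  loopless := by
    constructor
    rintro ⟨⟨s, hs⟩, i⟩ ⟨h, hadj⟩
    have : Fin.cast h i = i := by ext; rfl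
    rw [this] at hadj
    exact SimpleGraph.irrefl _ hadj

lemma walk_pred {V : Type*} {H : SimpleGraph V} {P : V → Prop}
    (h : ∀ a b, H.Adj a b → P a → P b) {u v : V} (p : H.Walk u v) (hu : P u) : P v := by
  induction p with
  | nil => exact hu
  | cons h' p ih => exact ih (h _ _ h' hu)

lemma sigma_adj_iff {S : Set ℕ} {n : ℕ} (x y : Σ s : S, Fin (s : ℕ))
    (hx : (x.1 : ℕ) = n) (hy : (y.1 : ℕ) = n) :
    (cyclesDisjointUnion S).Adj x y ↔ (cycleGraph n).Adj (Fin.cast hx x.2) (Fin.cast hy y.2) := by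
  obtain ⟨⟨a, ha⟩, i⟩ := x
  obtain ⟨⟨b, hb⟩, j⟩ := y
  dsimp only at hx hy
  subst hx
  subst hy
  constructor
  · rintro ⟨h, hadj⟩
    simpa [Fin.ext_iff] using hadj
  · intro hadj
    exact ⟨rfl, by simpa [Fin.ext_iff] using hadj⟩

open Fin.CommRing in
lemma cycle_emb_le {m s : ℕ} (hm : 3 ≤ m) (hs : 3 ≤ s)
    (g : cycleGraph m ↪g cycleGraph s) : s ≤ m := by
  obtain ⟨m', rfl⟩ : ∃ k, m = k + 3 := ⟨m - 3, by omega⟩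
  obtain ⟨s', rfl⟩ : ∃ k, s = k + 3 := ⟨s - 3, by omega⟩
  -- closure of the range under adjacency
  have closure : ∀ (a : Fin (m' + 3)) (w : Fin (s' + 3)),
      (cycleGraph (s' + 3)).Adj (g a) w → ∃ b, g b = w := by
    intro a w hw
    have hadj1 : (cycleGraph (m' + 3)).Adj a (a - 1) := by
      have : (m' + 3) = (m' + 1) + 2 := by omega
      rw [show (m' + 3) = (m' + 1) + 2 from by omega] at *
      exact cycleGraph_adj.mpr (Or.inl (by ring))
    have hadj2 : (cycleGraph (m' + 3)).Adj a (a + 1) := by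
      rw [show (m' + 3) = (m' + 1) + 2 from by omega] at *
      exact cycleGraph_adj.mpr (Or.inr (by ring))
    have hne : g (a - 1) ≠ g (a + 1) := by
      intro h
      have h' : a - 1 = a + 1 := g.injective h
      have h2 : ((1 : Fin (m' + 3)) + 1) = 0 := by linear_combination -h'
      have hv : (1 + 1) % (m' + 3) = 0 := by
        simpa [Fin.add_def, Fin.val_one] using congrArg Fin.val h2
      rw [Nat.mod_eq_of_lt (by omega)] at hv
      exact absurd hv (by omega)
    have hsub : ({g (a - 1), g (a + 1)} : Finset (Fin (s' + 3))) ⊆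
        (cycleGraph (s' + 3)).neighborFinset (g a) := by
      intro x hx
      rw [Finset.mem_insert, Finset.mem_singleton] at hx
      rw [mem_neighborFinset]
      rcases hx with rfl | rfl
      · exact g.map_adj_iff.mpr hadj1
      · exact g.map_adj_iff.mpr hadj2
    have hcard : ((cycleGraph (s' + 3)).neighborFinset (g a)).card = 2 := by
      rw [← SimpleGraph.degree]
      exact cycleGraph_degree_three_le
    have heq : ({g (a - 1), g (a + 1)} : Finset (Fin (s' + 3))) =
        (cycleGraph (s' + 3)).neighborFinset (g a) := by
      apply Finset.eq_of_subset_of_card_le hsub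
      rw [hcard, Finset.card_pair hne]
    have hwmem : w ∈ ({g (a - 1), g (a + 1)} : Finset (Fin (s' + 3))) := by
      rw [heq, mem_neighborFinset]; exact hw
    rw [Finset.mem_insert, Finset.mem_singleton] at hwmem
    rcases hwmem with rfl | rfl
    · exact ⟨a - 1, rfl⟩
    · exact ⟨a + 1, rfl⟩
  have hsurj : Function.Surjective g := by
    intro w
    obtain ⟨p⟩ := cycleGraph_preconnected (g 0) w
    refine walk_pred (P := fun x => ∃ b, g b = x) ?_ p ⟨0, rfl⟩
    rintro x y hxy ⟨b, rfl⟩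
    exact closure b y hxy
  have := Fintype.card_le_of_surjective g hsurj
  simpa using this

/-- Let `G` be a finite simple graph containing an induced cycle, and let
`m` be the maximal `n ≥ 3` such that `cycleGraph n` embeds into `G`. If every element of
`S` is strictly greater than `m`, then `G` does not embed into the disjoint union `D_S` of
the cycles `C_s`, `s ∈ S`; i.e. `D_S` is `G`-free. -/
theorem not_embedding_cyclesDisjointUnion_of_gt_max_cycle
    {α : Type*} [Fintype α] (G : SimpleGraph α) (m : ℕ) (hm : 3 ≤ m)
    (hmem : Nonempty (cycleGraph m ↪g G))
    (hmax : ∀ n, 3 ≤ n → Nonempty (cycleGraph n ↪g G) → n ≤ m)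
    (S : Set ℕ) (hS : ∀ s ∈ S, m < s) :
    ¬ Nonempty (G ↪g cyclesDisjointUnion S) := by
  rintro ⟨e0⟩
  obtain ⟨ec⟩ := hmem
  let e : cycleGraph m ↪g cyclesDisjointUnion S := e0.comp ec
  have hconst : ∀ v : Fin m, ((e v).1 : ℕ) = ((e ⟨0, by omega⟩).1 : ℕ) := by
    intro v
    obtain ⟨p⟩ := cycleGraph_preconnected v (⟨0, by omega⟩ : Fin m)
    have := walk_pred (P := fun x : Fin m => ((e x).1 : ℕ) = ((e v).1 : ℕ)) ?_ p rfl
    · exact this.symm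
    · rintro a b hab hav
      obtain ⟨h, -⟩ := e.map_adj_iff.mpr hab
      rw [← h]; exact hav
  set s : ℕ := ((e ⟨0, by omega⟩).1 : ℕ) with hsdef
  have hsS : s ∈ S := (e ⟨0, by omega⟩).1.2
  have hms : m < s := hS s hsS
  -- build an embedding cycleGraph m ↪g cycleGraph s
  have hmap : ∀ u v : Fin m, (cycleGraph s).Adj (Fin.cast (hconst u) (e u).2)
      (Fin.cast (hconst v) (e v).2) ↔ (cycleGraph m).Adj u v := by
    intro u v
    rw [← sigma_adj_iff (e u) (e v) (hconst u) (hconst v), e.map_adj_iff]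
  have hinj : Function.Injective (fun v : Fin m => Fin.cast (hconst v) (e v).2) := by
    intro u v h
    apply e.injective
    have h1 : (e u).1 = (e v).1 := Subtype.ext ((hconst u).trans (hconst v).symm)
    refine Sigma.ext h1 ?_
    have := congrArg Fin.val h
    simp only [Fin.coe_cast] at this
    exact (Fin.heq_ext_iff (by rw [h1])).mpr this
  let g : cycleGraph m ↪g cycleGraph s :=
    ⟨⟨fun v => Fin.cast (hconst v) (e v).2, hinj⟩, hmap _ _⟩
  have := cycle_emb_le hm (by omega) g
  omega
end

section
/- Let G be a simple graph on a countable vertex type with no induced subgraph isomorphic to pathGraph 4 (a cograph), let u ≠ v be vertices, and suppose S is a strong module of G containing u and v that is contained in every strong module containing u and v (i.e., S is the least strong module containing u and v). Then for every vertex w, w ∈ S if and only if w ∈ M(u,v) or v ∉ M(u,w). -/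
open SimpleGraph

/-- A *module* of a simple graph `G` is a set `A` of vertices such that for all
`u, v ∈ A` and `w ∉ A`, `w` is adjacent to `u` iff `w` is adjacent to `v`. -/
def SimpleGraph.IsModule {V : Type*} (G : SimpleGraph V) (A : Set V) : Prop :=
  ∀ u ∈ A, ∀ v ∈ A, ∀ w ∉ A, (G.Adj w u ↔ G.Adj w v)

/-- A module `A` is *strong* if every module `B` satisfies `A ⊆ B`, `B ⊆ A`, or
`A ∩ B = ∅`. -/
def SimpleGraph.IsStrongModule {V : Type*} (G : SimpleGraph V) (A : Set V) : Prop :=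
  G.IsModule A ∧ ∀ B : Set V, G.IsModule B → A ⊆ B ∨ B ⊆ A ∨ A ∩ B = ∅

/-- `M(x,y)`: the intersection of all modules of `G` containing both `x` and `y`
(the least module containing `x` and `y`). -/
def SimpleGraph.minModule {V : Type*} (G : SimpleGraph V) (x y : V) : Set V :=
  ⋂₀ {A : Set V | G.IsModule A ∧ x ∈ A ∧ y ∈ A}

section Aux

variable {V : Type*} {G : SimpleGraph V}

/-- Any intersection of modules is a module. -/
lemma aux_isModule_sInter {𝒮 : Set (Set V)} (h : ∀ Y ∈ 𝒮, G.IsModule Y) :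
    G.IsModule (⋂₀ 𝒮) := by
  intro a ha b hb z hz
  rw [Set.mem_sInter] at hz
  push_neg at hz
  obtain ⟨Y, hY, hzY⟩ := hz
  exact h Y hY a (ha Y hY) b (hb Y hY) z hzY

lemma aux_minModule_isModule (x y : V) : G.IsModule (G.minModule x y) :=
  aux_isModule_sInter (fun _ hY => hY.1)

lemma aux_left_mem_minModule (x y : V) : x ∈ G.minModule x y :=
  Set.mem_sInter.mpr fun _ hY => hY.2.1

lemma aux_right_mem_minModule (x y : V) : y ∈ G.minModule x y :=
  Set.mem_sInter.mpr fun _ hY => hY.2.2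

lemma aux_minModule_subset {x y : V} {D : Set V} (hD : G.IsModule D)
    (hx : x ∈ D) (hy : y ∈ D) : G.minModule x y ⊆ D :=
  Set.sInter_subset_of_mem ⟨hD, hx, hy⟩

/-- The union of two modules with a common point is a module. -/
lemma aux_isModule_union {A B : Set V} (hA : G.IsModule A) (hB : G.IsModule B)
    (p : V) (hpA : p ∈ A) (hpB : p ∈ B) : G.IsModule (A ∪ B) := by
  intro a ha b hb z hz
  have hzA : z ∉ A := fun h => hz (Or.inl h)
  have hzB : z ∉ B := fun h => hz (Or.inr h)
  have key : ∀ c ∈ A ∪ B, (G.Adj z c ↔ G.Adj z p) := by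
    rintro c (hc | hc)
    · exact hA c hc p hpA z hzA
    · exact hB c hc p hpB z hzB
  exact (key a ha).trans (key b hb).symm

/-- If `B` is a module not contained in `A`, then `A \ B` is a module. -/
lemma aux_isModule_diff {A B : Set V} (hA : G.IsModule A) (hB : G.IsModule B)
    (d : V) (hd : d ∈ B \ A) : G.IsModule (A \ B) := by
  intro a ha b hb z hz
  by_cases hzA : z ∈ A
  · have hzB : z ∈ B := by
      by_contra hzB
      exact hz ⟨hzA, hzB⟩
    have h1 : G.Adj a z ↔ G.Adj a d := hB z hzB d hd.1 a ha.2
    have h2 : G.Adj b z ↔ G.Adj b d := hB z hzB d hd.1 b hb.2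
    have h3 : G.Adj d a ↔ G.Adj d b := hA a ha.1 b hb.1 d hd.2
    rw [G.adj_comm z a, G.adj_comm z b, h1, h2, G.adj_comm a d, G.adj_comm b d]
    exact h3
  · exact hA a ha.1 b hb.1 z hzA

/-- The symmetric difference of two properly overlapping modules is a module. -/
lemma aux_isModule_symmDiff {A B : Set V} (hA : G.IsModule A) (hB : G.IsModule B)
    (p : V) (hp : p ∈ A ∩ B) (a₀ : V) (ha₀ : a₀ ∈ A \ B) (b₀ : V) (hb₀ : b₀ ∈ B \ A) :
    G.IsModule ((A \ B) ∪ (B \ A)) := by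
  intro x hx y hy z hz
  have hzAB : z ∈ A ↔ z ∈ B := by
    constructor
    · intro h
      by_contra hB'
      exact hz (Or.inl ⟨h, hB'⟩)
    · intro h
      by_contra hA'
      exact hz (Or.inr ⟨h, hA'⟩)
  by_cases hzA : z ∈ A
  · have hzB : z ∈ B := hzAB.mp hzA
    -- z is in both A and B
    rcases hx with hx | hx <;> rcases hy with hy | hy
    · -- x, y ∈ A \ B
      have h1 : G.Adj x z ↔ G.Adj x b₀ := hB z hzB b₀ hb₀.1 x hx.2
      have h2 : G.Adj y z ↔ G.Adj y b₀ := hB z hzB b₀ hb₀.1 y hy.2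
      have h3 : G.Adj b₀ x ↔ G.Adj b₀ y := hA x hx.1 y hy.1 b₀ hb₀.2
      rw [G.adj_comm z x, G.adj_comm z y, h1, h2, G.adj_comm x b₀, G.adj_comm y b₀]
      exact h3
    · -- x ∈ A \ B, y ∈ B \ A
      have h1 : G.Adj y z ↔ G.Adj y x := hA z hzA x hx.1 y hy.2
      have h2 : G.Adj x z ↔ G.Adj x y := hB z hzB y hy.1 x hx.2
      rw [G.adj_comm z x, G.adj_comm z y, h1, h2, G.adj_comm x y]
    · -- x ∈ B \ A, y ∈ A \ B
      have h1 : G.Adj x z ↔ G.Adj x y := hA z hzA y hy.1 x hx.2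
      have h2 : G.Adj y z ↔ G.Adj y x := hB z hzB x hx.1 y hy.2
      rw [G.adj_comm z x, G.adj_comm z y, h1, h2, G.adj_comm y x]
    · -- x, y ∈ B \ A
      have h1 : G.Adj x z ↔ G.Adj x a₀ := hA z hzA a₀ ha₀.1 x hx.2
      have h2 : G.Adj y z ↔ G.Adj y a₀ := hA z hzA a₀ ha₀.1 y hy.2
      have h3 : G.Adj a₀ x ↔ G.Adj a₀ y := hB x hx.1 y hy.1 a₀ ha₀.2
      rw [G.adj_comm z x, G.adj_comm z y, h1, h2, G.adj_comm x a₀, G.adj_comm y a₀]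
      exact h3
  · have hzB : z ∉ B := fun h => hzA (hzAB.mpr h)
    have key : ∀ c ∈ (A \ B) ∪ (B \ A), (G.Adj z c ↔ G.Adj z p) := by
      rintro c (hc | hc)
      · exact hA c hc.1 p hp.1 z hzA
      · exact hB c hc.1 p hp.2 z hzB
    exact (key x hx).trans (key y hy).symm

end Aux

/-- Let `G` be a cograph (a `pathGraph 4`-free simple graph) on a
countable vertex type, `u ≠ v` vertices, and `S` the least strong module of `G`
containing `u` and `v`. Then `w ∈ S` iff `w ∈ M(u,v)` or `v ∉ M(u,w)`. -/
theorem mem_least_strongModule_iff_of_p4Free {V : Type*} [Countable V]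
    (G : SimpleGraph V) (hfree : ¬ Nonempty (pathGraph 4 ↪g G))
    (u v : V) (huv : u ≠ v) (S : Set V)
    (hS : G.IsStrongModule S) (huS : u ∈ S) (hvS : v ∈ S)
    (hleast : ∀ B : Set V, G.IsStrongModule B → u ∈ B → v ∈ B → S ⊆ B)
    (w : V) :
    w ∈ S ↔ w ∈ G.minModule u v ∨ v ∉ G.minModule u w := by
  classical
  set A : Set V := G.minModule u v with hAdef
  have hAmod : G.IsModule A := aux_minModule_isModule u v
  have huA : u ∈ A := aux_left_mem_minModule u v
  have hvA : v ∈ A := aux_right_mem_minModule u v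
  constructor
  · -- forward direction
    intro hwS
    -- the target set
    set Z : Set V := {z | z ∈ A ∨ v ∉ G.minModule u z} with hZdef
    suffices hSZ : S ⊆ Z from hSZ hwS
    -- the family of modules between A and Z, and its union W
    set 𝒴 : Set (Set V) := {Y | G.IsModule Y ∧ A ⊆ Y ∧ Y ⊆ Z} with h𝒴def
    set W : Set V := ⋃₀ 𝒴 with hWdef
    have hAZ : A ⊆ Z := fun a ha => Or.inl ha
    have hA𝒴 : A ∈ 𝒴 := ⟨hAmod, subset_rfl, hAZ⟩
    have hAW : A ⊆ W := fun a ha => ⟨A, hA𝒴, ha⟩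
    have huW : u ∈ W := hAW huA
    have hvW : v ∈ W := hAW hvA
    have hWZ : W ⊆ Z := by
      rintro z ⟨Y, hY, hzY⟩
      exact hY.2.2 hzY
    have hunion𝒴 : ∀ Y₁ ∈ 𝒴, ∀ Y₂ ∈ 𝒴, Y₁ ∪ Y₂ ∈ 𝒴 := by
      intro Y₁ hY₁ Y₂ hY₂
      refine ⟨aux_isModule_union hY₁.1 hY₂.1 u (hY₁.2.1 huA) (hY₂.2.1 huA), ?_, ?_⟩
      · exact fun a ha => Or.inl (hY₁.2.1 ha)
      · rintro a (ha | ha)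
        · exact hY₁.2.2 ha
        · exact hY₂.2.2 ha
    have hWmod : G.IsModule W := by
      rintro a ⟨Ya, hYa, haY⟩ b ⟨Yb, hYb, hbY⟩ z hz
      have hY' : Ya ∪ Yb ∈ 𝒴 := hunion𝒴 Ya hYa Yb hYb
      have hzY : z ∉ Ya ∪ Yb := fun h => hz ⟨Ya ∪ Yb, hY', h⟩
      exact hY'.1 a (Or.inl haY) b (Or.inr hbY) z hzY
    -- Key lemma: any module overlapping W but not containing it lies inside Z
    have key : ∀ D : Set V, G.IsModule D → ∀ x₀, x₀ ∈ W → x₀ ∈ D →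
        ∀ ξ, ξ ∈ W → ξ ∉ D → ∀ d ∈ D, d ∈ Z := by
      intro D hD x₀ hx₀W hx₀D ξ hξW hξD d hd
      by_cases hdA : d ∈ A
      · exact Or.inl hdA
      by_cases hdW : d ∈ W
      · exact hWZ hdW
      -- it suffices to find a module containing u and d but not v
      suffices hF : ∃ F : Set V, G.IsModule F ∧ u ∈ F ∧ d ∈ F ∧ v ∉ F by
        obtain ⟨F, h1, h2, h3, h4⟩ := hF
        exact Or.inr fun hv => h4 (Set.mem_sInter.mp hv F ⟨h1, h2, h3⟩)
      by_cases huD : u ∈ D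
      · by_cases hvD : v ∈ D
        · -- u, v ∈ D, hence A ⊆ D; use E = M(u,ξ) and W △ D
          have hAD : A ⊆ D := aux_minModule_subset hD huD hvD
          have hξA : ξ ∉ A := fun h => hξD (hAD h)
          have hvξ : v ∉ G.minModule u ξ := ((hWZ hξW).resolve_left hξA)
          have hT : G.IsModule ((W \ D) ∪ (D \ W)) :=
            aux_isModule_symmDiff hWmod hD x₀ ⟨hx₀W, hx₀D⟩ ξ ⟨hξW, hξD⟩ d ⟨hd, hdW⟩
          refine ⟨G.minModule u ξ ∪ ((W \ D) ∪ (D \ W)),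
            aux_isModule_union (aux_minModule_isModule u ξ) hT ξ
              (aux_right_mem_minModule u ξ) (Or.inl ⟨hξW, hξD⟩),
            Or.inl (aux_left_mem_minModule u ξ), Or.inr (Or.inr ⟨hd, hdW⟩), ?_⟩
          rintro (h | h | h)
          · exact hvξ h
          · exact h.2 hvD
          · exact h.2 hvW
        · exact ⟨D, hD, huD, hd, hvD⟩
      · by_cases hvD : v ∈ D
        · -- u ∉ D, v ∈ D: use A △ D
          have hT : G.IsModule ((A \ D) ∪ (D \ A)) :=
            aux_isModule_symmDiff hAmod hD v ⟨hvA, hvD⟩ u ⟨huA, huD⟩ d ⟨hd, hdA⟩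
          refine ⟨(A \ D) ∪ (D \ A), hT, Or.inl ⟨huA, huD⟩, Or.inr ⟨hd, hdA⟩, ?_⟩
          rintro (h | h)
          · exact h.2 hvD
          · exact h.2 hvA
        · -- u, v ∉ D: then A ∩ D = ∅, so x₀ ∉ A
          have hAdiff : G.IsModule (A \ D) := aux_isModule_diff hAmod hD d ⟨hd, hdA⟩
          have hsub : A ⊆ A \ D :=
            aux_minModule_subset hAdiff ⟨huA, huD⟩ ⟨hvA, hvD⟩
          have hx₀A : x₀ ∉ A := fun h => (hsub h).2 hx₀D
          have hvx₀ : v ∉ G.minModule u x₀ := ((hWZ hx₀W).resolve_left hx₀A)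
          refine ⟨G.minModule u x₀ ∪ D,
            aux_isModule_union (aux_minModule_isModule u x₀) hD x₀
              (aux_right_mem_minModule u x₀) hx₀D,
            Or.inl (aux_left_mem_minModule u x₀), Or.inr hd, ?_⟩
          rintro (h | h)
          · exact hvx₀ h
          · exact hvD h
    -- W is a strong module
    have hWstrong : G.IsStrongModule W := by
      refine ⟨hWmod, fun D hD => ?_⟩
      by_cases h1 : W ∩ D = ∅
      · exact Or.inr (Or.inr h1)
      by_cases h2 : W ⊆ D
      · exact Or.inl h2
      refine Or.inr (Or.inl ?_)
      obtain ⟨x₀, hx₀W, hx₀D⟩ := Set.nonempty_iff_ne_empty.mpr h1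
      obtain ⟨ξ, hξW, hξD⟩ := Set.not_subset.mp h2
      have hDZ : ∀ d ∈ D, d ∈ Z := key D hD x₀ hx₀W hx₀D ξ hξW hξD
      intro d hd
      have hWD𝒴 : W ∪ D ∈ 𝒴 := by
        refine ⟨aux_isModule_union hWmod hD x₀ hx₀W hx₀D,
          fun a ha => Or.inl (hAW ha), ?_⟩
        rintro a (ha | ha)
        · exact hWZ ha
        · exact hDZ a ha
      exact ⟨W ∪ D, hWD𝒴, Or.inr hd⟩
    exact (hleast W hWstrong huW hvW).trans hWZ
  · -- backward direction
    rintro (hwA | hv)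
    · exact aux_minModule_subset hS.1 huS hvS hwA
    · by_contra hwS
      apply hv
      refine Set.mem_sInter.mpr fun D hD => ?_
      obtain ⟨hDmod, huD, hwD⟩ := hD
      rcases hS.2 D hDmod with hSD | hDS | hdisj
      · exact hSD hvS
      · exact absurd (hDS hwD) hwS
      · exact absurd (hdisj ▸ ⟨huS, huD⟩ : u ∈ (∅ : Set V)) (Set.notMem_empty u)
end
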